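/- Let f₁ = ![X, Z, Z, X, 1], f₂ = ![1, X, Z, Z, X], f₃ = ![X, 1, X, Z, Z], f₄ = ![Z, X, 1, X, Z] be the Pauli strings of the five-qubit code stabilizers, each f i : Fin 5 → Matrix (Fin 2) (Fin 2) ℂ. For a subset G ⊆ Fin 5, let S_G i denote the endomorphism PiTensorProduct.map (fun k : G => Matrix.toLin' (f i k)) of ⨂[ℂ] (k : G), ℂ². Then for every subset G of Fin 5 with G ≠ ∅ and G ≠ univ, there exist indices i ≠ j in Fin 4 (i.e. among the four stabilizers) such that S_G i ∘ S_G j = −(S_G j ∘ S_G i). -/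

import Mathlib

open scoped TensorProduct

namespace FiveQubitCode

/-- The Pauli matrix X. -/
def X : Matrix (Fin 2) (Fin 2) ℂ := !![0, 1; 1, 0]

/-- The Pauli matrix Z. -/
def Z : Matrix (Fin 2) (Fin 2) ℂ := !![1, 0; 0, -1]

/-- The Pauli strings of the four stabilizers of the five-qubit code. -/
def f : Fin 4 → Fin 5 → Matrix (Fin 2) (Fin 2) ℂ :=
  ![![X, Z, Z, X, 1], ![1, X, Z, Z, X], ![X, 1, X, Z, Z], ![Z, X, 1, X, Z]]

lemma hXZ : X * Z = -(Z * X) := by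
  ext a b; fin_cases a <;> fin_cases b <;> norm_num [X, Z, Matrix.mul_apply, Fin.sum_univ_two]

lemma hZX : Z * X = -(X * Z) := by rw [hXZ, neg_neg]

lemma comm1 (M : Matrix (Fin 2) (Fin 2) ℂ) : M * 1 = 1 * M := by rw [mul_one, one_mul]

lemma commMM (M : Matrix (Fin 2) (Fin 2) ℂ) : M * M = M * M := rfl

lemma key (G : Set (Fin 5)) (i j : Fin 4) (k₀ : Fin 5) (hk : k₀ ∈ G)
    (hanti : f i k₀ * f j k₀ = -(f j k₀ * f i k₀))
    (hcomm : ∀ k, k ∈ G → k ≠ k₀ → f i k * f j k = f j k * f i k) :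
    (PiTensorProduct.map fun k : G => Matrix.toLin' (f i k)) ∘ₗ
        (PiTensorProduct.map fun k : G => Matrix.toLin' (f j k)) =
      -((PiTensorProduct.map fun k : G => Matrix.toLin' (f j k)) ∘ₗ
        (PiTensorProduct.map fun k : G => Matrix.toLin' (f i k))) := by
  classical
  rw [← PiTensorProduct.map_comp, ← PiTensorProduct.map_comp]
  have h1 : (fun k : G => Matrix.toLin' (f i k) ∘ₗ Matrix.toLin' (f j k)) =
      Function.update (fun k : G => Matrix.toLin' (f j k) ∘ₗ Matrix.toLin' (f i k)) ⟨k₀, hk⟩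
        ((-1 : ℂ) • (Matrix.toLin' (f j k₀) ∘ₗ Matrix.toLin' (f i k₀))) := by
    funext k
    rcases eq_or_ne k ⟨k₀, hk⟩ with rfl | hkne
    · rw [Function.update_self, ← Matrix.toLin'_mul, ← Matrix.toLin'_mul, hanti]
      simp only [map_neg, LinearMap.neg_comp, neg_one_smul]
      exact (neg_one_smul ℂ _).symm
    · rw [Function.update_of_ne hkne, ← Matrix.toLin'_mul, ← Matrix.toLin'_mul,
        hcomm k.1 k.2 (fun h => hkne (Subtype.ext h))]
  rw [h1, PiTensorProduct.map_update_smul, Function.update_eq_self]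
  exact neg_one_smul ℂ (PiTensorProduct.map fun k : G => Matrix.toLin' (f j k) ∘ₗ Matrix.toLin' (f i k))

/-- for every nontrivial subset `G` of the five sites, two of the five-qubit-code
stabilizers anticommute when restricted (as endomorphisms of `⨂_{k ∈ G} ℂ²`) to `G`. -/
theorem restricted_stabilizers_anticommute :
    ∀ G : Set (Fin 5), G ≠ ∅ → G ≠ Set.univ →
      ∃ i j : Fin 4, i ≠ j ∧
        (PiTensorProduct.map fun k : G => Matrix.toLin' (f i k)) ∘ₗ
            (PiTensorProduct.map fun k : G => Matrix.toLin' (f j k)) =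
          -((PiTensorProduct.map fun k : G => Matrix.toLin' (f j k)) ∘ₗ
            (PiTensorProduct.map fun k : G => Matrix.toLin' (f i k))) := by
  intro G hne hnuniv
  by_cases h0 : (0:Fin 5) ∈ G <;> by_cases h1 : (1:Fin 5) ∈ G <;>
    by_cases h2 : (2:Fin 5) ∈ G <;> by_cases h3 : (3:Fin 5) ∈ G <;>
    by_cases h4 : (4:Fin 5) ∈ G
  · exact absurd (Set.eq_univ_iff_forall.2 (by intro x; fin_cases x <;> assumption)) hnuniv
  · refine ⟨1, 2, by decide, key G 1 2 2 h2 hZX ?_⟩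
    intro k hk hkne
    fin_cases k
    · exact (comm1 X).symm
    · exact comm1 X
    · exact absurd rfl hkne
    · exact commMM Z
    · exact absurd hk h4
  · refine ⟨0, 1, by decide, key G 0 1 1 h1 hZX ?_⟩
    intro k hk hkne
    fin_cases k
    · exact comm1 X
    · exact absurd rfl hkne
    · exact commMM Z
    · exact absurd hk h3
    · exact (comm1 X).symm
  · refine ⟨0, 1, by decide, key G 0 1 1 h1 hZX ?_⟩
    intro k hk hkne
    fin_cases k
    · exact comm1 X
    · exact absurd rfl hkne
    · exact commMM Z
    · exact absurd hk h3
    · exact absurd hk h4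
  · refine ⟨0, 2, by decide, key G 0 2 3 h3 hXZ ?_⟩
    intro k hk hkne
    fin_cases k
    · exact commMM X
    · exact comm1 Z
    · exact absurd hk h2
    · exact absurd rfl hkne
    · exact (comm1 Z).symm
  · refine ⟨0, 2, by decide, key G 0 2 3 h3 hXZ ?_⟩
    intro k hk hkne
    fin_cases k
    · exact commMM X
    · exact comm1 Z
    · exact absurd hk h2
    · exact absurd rfl hkne
    · exact absurd hk h4
  · refine ⟨0, 1, by decide, key G 0 1 1 h1 hZX ?_⟩
    intro k hk hkne
    fin_cases k
    · exact comm1 X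
    · exact absurd rfl hkne
    · exact absurd hk h2
    · exact absurd hk h3
    · exact (comm1 X).symm
  · refine ⟨0, 1, by decide, key G 0 1 1 h1 hZX ?_⟩
    intro k hk hkne
    fin_cases k
    · exact comm1 X
    · exact absurd rfl hkne
    · exact absurd hk h2
    · exact absurd hk h3
    · exact absurd hk h4
  · refine ⟨0, 1, by decide, key G 0 1 3 h3 hXZ ?_⟩
    intro k hk hkne
    fin_cases k
    · exact comm1 X
    · exact absurd hk h1
    · exact commMM Z
    · exact absurd rfl hkne
    · exact (comm1 X).symm
  · refine ⟨0, 1, by decide, key G 0 1 3 h3 hXZ ?_⟩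
    intro k hk hkne
    fin_cases k
    · exact comm1 X
    · exact absurd hk h1
    · exact commMM Z
    · exact absurd rfl hkne
    · exact absurd hk h4
  · refine ⟨0, 2, by decide, key G 0 2 2 h2 hZX ?_⟩
    intro k hk hkne
    fin_cases k
    · exact commMM X
    · exact absurd hk h1
    · exact absurd rfl hkne
    · exact absurd hk h3
    · exact (comm1 Z).symm
  · refine ⟨0, 2, by decide, key G 0 2 2 h2 hZX ?_⟩
    intro k hk hkne
    fin_cases k
    · exact commMM X
    · exact absurd hk h1
    · exact absurd rfl hkne
    · exact absurd hk h3
    · exact absurd hk h4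
  · refine ⟨0, 1, by decide, key G 0 1 3 h3 hXZ ?_⟩
    intro k hk hkne
    fin_cases k
    · exact comm1 X
    · exact absurd hk h1
    · exact absurd hk h2
    · exact absurd rfl hkne
    · exact (comm1 X).symm
  · refine ⟨0, 1, by decide, key G 0 1 3 h3 hXZ ?_⟩
    intro k hk hkne
    fin_cases k
    · exact comm1 X
    · exact absurd hk h1
    · exact absurd hk h2
    · exact absurd rfl hkne
    · exact absurd hk h4
  · refine ⟨0, 3, by decide, key G 0 3 0 h0 hXZ ?_⟩
    intro k hk hkne
    fin_cases k
    · exact absurd rfl hkne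
    · exact absurd hk h1
    · exact absurd hk h2
    · exact absurd hk h3
    · exact (comm1 Z).symm
  · refine ⟨0, 3, by decide, key G 0 3 0 h0 hXZ ?_⟩
    intro k hk hkne
    fin_cases k
    · exact absurd rfl hkne
    · exact absurd hk h1
    · exact absurd hk h2
    · exact absurd hk h3
    · exact absurd hk h4
  · refine ⟨0, 3, by decide, key G 0 3 1 h1 hZX ?_⟩
    intro k hk hkne
    fin_cases k
    · exact absurd hk h0
    · exact absurd rfl hkne
    · exact comm1 Z
    · exact commMM X
    · exact (comm1 Z).symm
  · refine ⟨0, 3, by decide, key G 0 3 1 h1 hZX ?_⟩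
    intro k hk hkne
    fin_cases k
    · exact absurd hk h0
    · exact absurd rfl hkne
    · exact comm1 Z
    · exact commMM X
    · exact absurd hk h4
  · refine ⟨0, 1, by decide, key G 0 1 1 h1 hZX ?_⟩
    intro k hk hkne
    fin_cases k
    · exact absurd hk h0
    · exact absurd rfl hkne
    · exact commMM Z
    · exact absurd hk h3
    · exact (comm1 X).symm
  · refine ⟨0, 1, by decide, key G 0 1 1 h1 hZX ?_⟩
    intro k hk hkne
    fin_cases k
    · exact absurd hk h0
    · exact absurd rfl hkne
    · exact commMM Z
    · exact absurd hk h3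
    · exact absurd hk h4
  · refine ⟨0, 2, by decide, key G 0 2 3 h3 hXZ ?_⟩
    intro k hk hkne
    fin_cases k
    · exact absurd hk h0
    · exact comm1 Z
    · exact absurd hk h2
    · exact absurd rfl hkne
    · exact (comm1 Z).symm
  · refine ⟨0, 2, by decide, key G 0 2 3 h3 hXZ ?_⟩
    intro k hk hkne
    fin_cases k
    · exact absurd hk h0
    · exact comm1 Z
    · exact absurd hk h2
    · exact absurd rfl hkne
    · exact absurd hk h4
  · refine ⟨0, 1, by decide, key G 0 1 1 h1 hZX ?_⟩
    intro k hk hkne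
    fin_cases k
    · exact absurd hk h0
    · exact absurd rfl hkne
    · exact absurd hk h2
    · exact absurd hk h3
    · exact (comm1 X).symm
  · refine ⟨0, 1, by decide, key G 0 1 1 h1 hZX ?_⟩
    intro k hk hkne
    fin_cases k
    · exact absurd hk h0
    · exact absurd rfl hkne
    · exact absurd hk h2
    · exact absurd hk h3
    · exact absurd hk h4
  · refine ⟨0, 1, by decide, key G 0 1 3 h3 hXZ ?_⟩
    intro k hk hkne
    fin_cases k
    · exact absurd hk h0
    · exact absurd hk h1
    · exact commMM Z
    · exact absurd rfl hkne
    · exact (comm1 X).symm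
  · refine ⟨0, 1, by decide, key G 0 1 3 h3 hXZ ?_⟩
    intro k hk hkne
    fin_cases k
    · exact absurd hk h0
    · exact absurd hk h1
    · exact commMM Z
    · exact absurd rfl hkne
    · exact absurd hk h4
  · refine ⟨0, 2, by decide, key G 0 2 2 h2 hZX ?_⟩
    intro k hk hkne
    fin_cases k
    · exact absurd hk h0
    · exact absurd hk h1
    · exact absurd rfl hkne
    · exact absurd hk h3
    · exact (comm1 Z).symm
  · refine ⟨0, 2, by decide, key G 0 2 2 h2 hZX ?_⟩
    intro k hk hkne
    fin_cases k
    · exact absurd hk h0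
    · exact absurd hk h1
    · exact absurd rfl hkne
    · exact absurd hk h3
    · exact absurd hk h4
  · refine ⟨0, 1, by decide, key G 0 1 3 h3 hXZ ?_⟩
    intro k hk hkne
    fin_cases k
    · exact absurd hk h0
    · exact absurd hk h1
    · exact absurd hk h2
    · exact absurd rfl hkne
    · exact (comm1 X).symm
  · refine ⟨0, 1, by decide, key G 0 1 3 h3 hXZ ?_⟩
    intro k hk hkne
    fin_cases k
    · exact absurd hk h0
    · exact absurd hk h1
    · exact absurd hk h2
    · exact absurd rfl hkne
    · exact absurd hk h4
  · refine ⟨1, 2, by decide, key G 1 2 4 h4 hXZ ?_⟩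
    intro k hk hkne
    fin_cases k
    · exact absurd hk h0
    · exact absurd hk h1
    · exact absurd hk h2
    · exact absurd hk h3
    · exact absurd rfl hkne
  · exact absurd (Set.eq_empty_iff_forall_notMem.2 (by intro x; fin_cases x <;> assumption)) hne

end FiveQubitCode
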